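/- arXiv:2503.20547 — 4 statements merged into one kernel-verified Lean document; each statement's English description precedes it below -/
import Mathlib

section
/- Let A be a real symmetric n×n matrix and O a real orthogonal n×n matrix. Let (1+A²)^{-1/2} denote the inverse of the unique positive-definite square root of the positive-definite matrix 1+A², and set X = (1+A²)^{-1/2} O and Y = A(1+A²)^{-1/2} O. Then the complex n×n matrix U = X + iY is unitary. -/
open Matrix

noncomputable section

/-- For a real symmetric matrix `A`, the matrix `1 + A²` is positive definite. -/
theorem onePlusSq_posDef {n : ℕ} (A : Matrix (Fin n) (Fin n) ℝ) (hA : Aᵀ = A) :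
    (1 + A * A).PosDef := by
  have h2 : (A * A).PosSemidef := by
    have h := Matrix.posSemidef_conjTranspose_mul_self A
    simpa [Matrix.conjTranspose_eq_transpose_of_trivial, hA] using h
  exact Matrix.PosDef.add_posSemidef Matrix.PosDef.one h2

open scoped MatrixOrder Matrix.Norms.L2Operator in
/-- `(1 + A²)^{-1/2}`: the inverse of the unique positive-definite square root of `1 + A²`. -/
def invSqrtOnePlusSq {n : ℕ} (A : Matrix (Fin n) (Fin n) ℝ) (hA : Aᵀ = A) :
    Matrix (Fin n) (Fin n) ℝ :=
  (CFC.sqrt (1 + A * A))⁻¹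

/-- If `A` is real symmetric, `O` is real orthogonal, `X = (1+A²)^{-1/2} O` and
`Y = A (1+A²)^{-1/2} O`, then the complex matrix `U = X + iY` is unitary. -/
theorem passive_unitary_of_cluster {n : ℕ} (A O : Matrix (Fin n) (Fin n) ℝ)
    (hA : Aᵀ = A) (hO : Oᵀ * O = 1) :
    (((invSqrtOnePlusSq A hA * O).map Complex.ofReal) +
        Complex.I • ((A * invSqrtOnePlusSq A hA * O).map Complex.ofReal)) ∈
      Matrix.unitaryGroup (Fin n) ℂ := by
  open scoped MatrixOrder Matrix.Norms.L2Operator in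
  set S := CFC.sqrt (1 + A * A) with hSdef
  have hSS : S * S = 1 + A * A := by
    open scoped MatrixOrder Matrix.Norms.L2Operator in
    exact CFC.sqrt_mul_sqrt_self _ (onePlusSq_posDef A hA).posSemidef.nonneg
  have hSsymm : Sᵀ = S := by
    open scoped MatrixOrder Matrix.Norms.L2Operator in
    have := (CFC.sqrt_nonneg (1 + A * A)).posSemidef.isHermitian
    simpa [Matrix.IsHermitian, Matrix.conjTranspose_eq_transpose_of_trivial] using this
  have hSunit : IsUnit S.det := by
    have h1 : IsUnit ((1 + A * A).det) := (onePlusSq_posDef A hA).det_pos.ne'.isUnit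
    have : S.det * S.det = (1 + A * A).det := by rw [← Matrix.det_mul, hSS]
    exact isUnit_of_mul_isUnit_left (this ▸ h1)
  set B := invSqrtOnePlusSq A hA with hBdef
  have hBS : B * S = 1 := Matrix.nonsing_inv_mul S hSunit
  have hSB : S * B = 1 := Matrix.mul_nonsing_inv S hSunit
  have hBsymm : Bᵀ = B := by
    rw [hBdef, invSqrtOnePlusSq, Matrix.transpose_nonsing_inv, hSsymm]
  -- key real identities
  set X := B * O with hX
  set Y := A * B * O with hY
  have key1 : Xᵀ * X + Yᵀ * Y = 1 := by
    have : Xᵀ * X + Yᵀ * Y = Oᵀ * (B * (1 + A * A) * B) * O := by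
      rw [hX, hY]
      simp only [Matrix.transpose_mul, hBsymm, hA]
      noncomm_ring
    rw [this, ← hSS]
    calc Oᵀ * (B * (S * S) * B) * O = Oᵀ * ((B * S) * (S * B)) * O := by noncomm_ring
    _ = 1 := by rw [hBS, hSB]; simp [hO]
  have key2 : Xᵀ * Y = Yᵀ * X := by
    rw [hX, hY]
    simp only [Matrix.transpose_mul, hBsymm, hA]
    noncomm_ring
  -- push to ℂ
  rw [Matrix.mem_unitaryGroup_iff']
  have hmap : ∀ (M N : Matrix (Fin n) (Fin n) ℝ),
      (M * N).map Complex.ofReal = M.map Complex.ofReal * N.map Complex.ofReal := fun M N =>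
    Matrix.map_mul (f := Complex.ofRealHom)
  have hstar : ∀ (M : Matrix (Fin n) (Fin n) ℝ),
      star (M.map Complex.ofReal) = Mᵀ.map Complex.ofReal := by
    intro M
    ext i j
    simp [Matrix.conjTranspose_apply]
  have key1' : (Xᵀ * X).map Complex.ofReal + (Yᵀ * Y).map Complex.ofReal = 1 := by
    rw [← Matrix.map_add _ (by simp) , key1]
    ext i j
    simp [Matrix.one_apply]
    split <;> simp
  calc star (X.map Complex.ofReal + Complex.I • Y.map Complex.ofReal) *
        (X.map Complex.ofReal + Complex.I • Y.map Complex.ofReal)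
      = (Xᵀ.map Complex.ofReal - Complex.I • Yᵀ.map Complex.ofReal) *
        (X.map Complex.ofReal + Complex.I • Y.map Complex.ofReal) := by
        rw [star_add, hstar]
        congr 1
        rw [star_smul, hstar]
        simp [sub_eq_add_neg, Complex.conj_I]
    _ = (Xᵀ * X).map Complex.ofReal + (Yᵀ * Y).map Complex.ofReal
        + Complex.I • ((Xᵀ * Y).map Complex.ofReal - (Yᵀ * X).map Complex.ofReal) := by
        simp only [hmap]
        rw [mul_add, sub_mul, sub_mul]
        rw [Matrix.mul_smul, Matrix.smul_mul, Matrix.mul_smul, Matrix.smul_mul, smul_smul,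
          Complex.I_mul_I]
        simp only [neg_one_smul, smul_sub]
        abel
    _ = 1 := by rw [key2, sub_self, smul_zero, add_zero, key1']
end
end

section
/- Let λ, μ be real numbers with λ > 0 and λ² − μ² = 1, and let Γ_EPR(λ,μ) be the 4×4 matrix [[λ,0,0,μ],[0,λ,μ,0],[0,μ,λ,0],[μ,0,0,λ]]. Then the characteristic polynomial of the complex matrix Ω₂ · Γ_EPR(λ,μ) equals (X² + 1)². Equivalently, the two symplectic eigenvalues of Γ_EPR(λ,μ) both equal 1 (the state is pure). -/
open Matrix Polynomial

noncomputable section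

/-- The standard symplectic form `Ω_n` in quadrature ordering `(Q₁,…,Qₙ,P₁,…,Pₙ)`. -/
def Omega (n : ℕ) : Matrix (Fin n ⊕ Fin n) (Fin n ⊕ Fin n) ℝ :=
  Matrix.fromBlocks 0 1 (-1) 0

/-- The 4×4 EPR covariance matrix with diagonal entries `l` and antidiagonal
entries `m`, in ordering `(Q₁,Q₂,P₁,P₂)`. -/
def GammaEPR (l m : ℝ) : Matrix (Fin 2 ⊕ Fin 2) (Fin 2 ⊕ Fin 2) ℝ :=
  Matrix.fromBlocks (l • 1) (m • !![0,1;1,0]) (m • !![0,1;1,0]) (l • 1)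

set_option maxHeartbeats 1000000 in
/-- If `λ > 0` and `λ² − μ² = 1`, the characteristic polynomial of `Ω₂ Γ_EPR(λ,μ)`
over `ℂ` is `(X² + 1)²`: both symplectic eigenvalues of `Γ_EPR(λ,μ)` equal 1,
i.e. the state is pure. -/
theorem charpoly_GammaEPR (l m : ℝ) (hl : 0 < l) (hlm : l ^ 2 - m ^ 2 = 1) :
    ((Omega 2 * GammaEPR l m).map Complex.ofReal).charpoly = (X ^ 2 + 1) ^ 2 := by
  have hc : (l:ℂ) ^ 2 - (m:ℂ) ^ 2 = 1 := by exact_mod_cast hlm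
  have hM : (Matrix.reindex finSumFinEquiv finSumFinEquiv)
      ((Omega 2 * GammaEPR l m).map Complex.ofReal).charmatrix =
      !![X, -C (m:ℂ), -C (l:ℂ), 0;
         -C (m:ℂ), X, 0, -C (l:ℂ);
         C (l:ℂ), 0, X, C (m:ℂ);
         0, C (l:ℂ), C (m:ℂ), X] := by
    refine Matrix.ext fun i j => ?_
    have e0 : (finSumFinEquiv.symm (⟨0, by decide⟩ : Fin (2 + 2)) : Fin 2 ⊕ Fin 2) = Sum.inl 0 := rfl
    have e1 : (finSumFinEquiv.symm (⟨1, by decide⟩ : Fin (2 + 2)) : Fin 2 ⊕ Fin 2) = Sum.inl 1 := rfl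
    have e2 : (finSumFinEquiv.symm (⟨2, by decide⟩ : Fin (2 + 2)) : Fin 2 ⊕ Fin 2) = Sum.inr 0 := rfl
    have e3 : (finSumFinEquiv.symm (⟨3, by decide⟩ : Fin (2 + 2)) : Fin 2 ⊕ Fin 2) = Sum.inr 1 := rfl
    fin_cases i <;> fin_cases j <;>
      simp only [Matrix.reindex_apply, Matrix.submatrix_apply, e0, e1, e2, e3] <;>
      norm_num [Matrix.charmatrix_apply, Omega, GammaEPR,
        Matrix.mul_apply, Fin.sum_univ_two, Matrix.one_apply, 
        Matrix.map_apply, Matrix.diagonal_apply] <;> simp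
  rw [Matrix.charpoly, ← Matrix.det_reindex_self finSumFinEquiv, hM]
  simp [Matrix.det_succ_row_zero, Fin.sum_univ_succ, Fin.succAbove]
  ring_nf
  have h1 : (C (l:ℂ))^2 - (C (m:ℂ))^2 = 1 := by
    rw [← C_pow, ← C_pow, ← C_sub, hc, C_1]
  linear_combination (2 * X^2 + C (l:ℂ)^2 - C (m:ℂ)^2 + 1) * h1
end
end

section
/- Let Γ be a positive-definite real 2n×2n matrix, S a real symplectic 2n×2n matrix, and λ > 0. Suppose Γ' = SΓSᵀ has its first mode in a decoupled thermal state with photon-number parameter λ: the (Q₁,Q₁) and (P₁,P₁) entries of Γ' equal λ, and every other entry of Γ' in the Q₁-row and in the P₁-row (and the corresponding columns) is zero. Then λ is a symplectic eigenvalue of Γ, i.e. iλ is an eigenvalue of the complex matrix Ω_nΓ. -/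
open Matrix

noncomputable section

lemma Omega_mul_transpose (n : ℕ) : Omega n * (Omega n)ᵀ = 1 := by
  simp [Omega, fromBlocks_transpose, fromBlocks_multiply, ← fromBlocks_one]

lemma map_mul_ofReal {ι : Type*} [Fintype ι] (A B : Matrix ι ι ℝ) :
    (A * B).map Complex.ofReal = A.map Complex.ofReal * B.map Complex.ofReal :=
  Matrix.map_mul (f := Complex.ofRealHom)

lemma Omega_det_ne_zero (n : ℕ) : (Omega n).det ≠ 0 := by
  intro h
  have := congrArg Matrix.det (Omega_mul_transpose n)
  rw [Matrix.det_mul, h, zero_mul, Matrix.det_one] at this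
  exact zero_ne_one this

/-- The decoupled eigenvector lemma: if the first-mode rows/columns of `A` are
thermal with parameter `l`, then `det ((I·l)•1 - (Ω A)_ℂ) = 0`. -/
lemma det_sub_eq_zero_of_decoupled {m : ℕ}
    (A : Matrix (Fin (m + 1) ⊕ Fin (m + 1)) (Fin (m + 1) ⊕ Fin (m + 1)) ℝ) (l : ℝ)
    (hcolQ : ∀ u, A u (Sum.inl 0) = if u = Sum.inl 0 then l else 0)
    (hcolP : ∀ u, A u (Sum.inr 0) = if u = Sum.inr 0 then l else 0) :
    ((Complex.I * l) • (1 : Matrix (Fin (m + 1) ⊕ Fin (m + 1)) (Fin (m + 1) ⊕ Fin (m + 1)) ℂ)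
      - (Omega (m + 1) * A).map Complex.ofReal).det = 0 := by
  classical
  set v : (Fin (m + 1) ⊕ Fin (m + 1)) → ℂ :=
    Pi.single (Sum.inl 0) 1 + Pi.single (Sum.inr 0) Complex.I with hv
  have hvne : v ≠ 0 := by
    intro h
    have := congrFun h (Sum.inl 0)
    simp [hv, Pi.single_apply] at this
  have hGv : (A.map Complex.ofReal) *ᵥ v = (l : ℂ) • v := by
    funext u
    simp only [hv, mulVec_add, mulVec_single, Pi.add_apply, map_apply, Pi.smul_apply,
      Pi.single_apply, smul_eq_mul, col_apply, op_smul_eq_mul]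
    rw [hcolQ u, hcolP u]
    rcases u with (j | j) <;> by_cases h : j = 0 <;> simp [h, mul_comm]
  have hOv : ((Omega (m + 1)).map Complex.ofReal) *ᵥ v = Complex.I • v := by
    funext u
    simp only [hv, mulVec_add, mulVec_single, Pi.add_apply, map_apply, Pi.smul_apply,
      Pi.single_apply, smul_eq_mul]
    rcases u with (j | j) <;> by_cases h : j = 0 <;>
      simp [h, Omega, fromBlocks_apply₁₁, fromBlocks_apply₁₂, fromBlocks_apply₂₁,
        fromBlocks_apply₂₂, one_apply, Complex.I_mul_I, mul_comm]
  have hMv : ((Omega (m + 1) * A).map Complex.ofReal) *ᵥ v = (Complex.I * l) • v := by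
    have hmap : (Omega (m + 1) * A).map Complex.ofReal
        = ((Omega (m + 1)).map Complex.ofReal) * (A.map Complex.ofReal) :=
      map_mul_ofReal _ _
    rw [hmap, ← mulVec_mulVec, hGv, mulVec_smul, hOv, smul_smul, mul_comm]
  rw [← Matrix.exists_mulVec_eq_zero_iff]
  refine ⟨v, hvne, ?_⟩
  rw [sub_mulVec, hMv, smul_mulVec, one_mulVec, sub_self]

/-- If after a symplectic transformation `Γ' = S Γ Sᵀ` the first mode is in a
decoupled thermal state with parameter `λ` (diagonal entries `λ` on `Q₁,P₁` and all
other entries of the `Q₁`- and `P₁`-rows/columns zero), then `λ` is a symplectic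
eigenvalue of `Γ`, i.e. `iλ` is an eigenvalue of `Ω_n Γ` over `ℂ`. -/
theorem sympl_eigenvalue_of_decoupled_thermal_mode {n : ℕ}
    (Γ S : Matrix (Fin (n + 1) ⊕ Fin (n + 1)) (Fin (n + 1) ⊕ Fin (n + 1)) ℝ)
    (hΓ : Γ.PosDef) (hS : Sᵀ * Omega (n + 1) * S = Omega (n + 1))
    (l : ℝ) (hl : 0 < l)
    (hQQ : (S * Γ * Sᵀ) (Sum.inl 0) (Sum.inl 0) = l)
    (hPP : (S * Γ * Sᵀ) (Sum.inr 0) (Sum.inr 0) = l)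
    (hQ : ∀ u, u ≠ Sum.inl 0 →
      (S * Γ * Sᵀ) (Sum.inl 0) u = 0 ∧ (S * Γ * Sᵀ) u (Sum.inl 0) = 0)
    (hP : ∀ u, u ≠ Sum.inr 0 →
      (S * Γ * Sᵀ) (Sum.inr 0) u = 0 ∧ (S * Γ * Sᵀ) u (Sum.inr 0) = 0) :
    (Complex.I * l) ∈ spectrum ℂ ((Omega (n + 1) * Γ).map Complex.ofReal) := by
  classical
  -- columns of S Γ Sᵀ at the first mode
  have hcolQ : ∀ u, (S * Γ * Sᵀ) u (Sum.inl 0) = if u = Sum.inl 0 then l else 0 := by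
    intro u
    by_cases h : u = Sum.inl 0
    · simp [h, hQQ]
    · simp [h, (hQ u h).2]
  have hcolP : ∀ u, (S * Γ * Sᵀ) u (Sum.inr 0) = if u = Sum.inr 0 then l else 0 := by
    intro u
    by_cases h : u = Sum.inr 0
    · simp [h, hPP]
    · simp [h, (hP u h).2]
  have hdet' := det_sub_eq_zero_of_decoupled (S * Γ * Sᵀ) l hcolQ hcolP
  -- similarity via T = Sᵀ over ℂ
  set T : Matrix (Fin (n + 1) ⊕ Fin (n + 1)) (Fin (n + 1) ⊕ Fin (n + 1)) ℂ :=
    Sᵀ.map Complex.ofReal with hT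
  have h1 : ((Omega (n + 1) * Γ).map Complex.ofReal) * T
      = T * ((Omega (n + 1) * (S * Γ * Sᵀ)).map Complex.ofReal) := by
    have key : Omega (n + 1) * Γ * Sᵀ = Sᵀ * (Omega (n + 1) * (S * Γ * Sᵀ)) := by
      calc Omega (n + 1) * Γ * Sᵀ = Sᵀ * Omega (n + 1) * S * Γ * Sᵀ := by rw [hS]
        _ = Sᵀ * (Omega (n + 1) * (S * Γ * Sᵀ)) := by noncomm_ring
    rw [hT, ← map_mul_ofReal, ← map_mul_ofReal, key]
  have hsim : ((Complex.I * (l : ℂ)) • 1 - (Omega (n + 1) * Γ).map Complex.ofReal) * T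
      = T * ((Complex.I * (l : ℂ)) • 1
          - (Omega (n + 1) * (S * Γ * Sᵀ)).map Complex.ofReal) := by
    rw [sub_mul, mul_sub, h1, smul_mul_assoc, one_mul, mul_smul_comm, mul_one]
  -- T has nonzero determinant
  have hdetS : S.det ≠ 0 := by
    intro h
    have h2 := congrArg Matrix.det hS
    rw [Matrix.det_mul, Matrix.det_mul, Matrix.det_transpose, h] at h2
    simp only [mul_zero, zero_mul] at h2
    exact Omega_det_ne_zero (n + 1) h2.symm
  have hdetT : T.det ≠ 0 := by
    have : T.det = ((Sᵀ.det : ℝ) : ℂ) :=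
      ((Complex.ofRealHom : ℝ →+* ℂ).map_det Sᵀ).symm
    rw [this, Matrix.det_transpose]
    simpa using hdetS
  -- transfer the determinant being zero
  have hdet : ((Complex.I * (l : ℂ)) • 1
      - (Omega (n + 1) * Γ).map Complex.ofReal).det = 0 := by
    have h3 := congrArg Matrix.det hsim
    rw [Matrix.det_mul, Matrix.det_mul, hdet', mul_zero] at h3
    exact (mul_eq_zero.mp h3).resolve_right hdetT
  -- conclude
  rw [spectrum.mem_iff, Algebra.algebraMap_eq_smul_one]
  intro hunit
  rw [Matrix.isUnit_iff_isUnit_det, hdet] at hunit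
  exact hunit.ne_zero rfl
end
end

section
/- (Sufficiency of the symplectic-spectrum criterion for graph states with equal squeezing.) Let n = n₁ + n₂ with n₁, n₂ ≥ 1, let s > 0 with s ≠ 1, and let Γ = S · Γ_sqz(n,s) · Sᵀ, where S is a 2n×2n real matrix that is both orthogonal and symplectic (the covariance matrix of a pure Gaussian graph state built from n equally squeezed modes and passive optics). Write Γ in the global ordering (Q^A, P^A, Q^B, P^B) with Alice holding the first n₁ modes and Bob the last n₂, and let Γ_A be Alice's 2n₁×2n₁ reduced covariance matrix. If λ = (s+s⁻¹)/2 is a symplectic eigenvalue of Γ_A (iλ is an eigenvalue of Ω_{n₁}Γ_A over ℂ), then there exist real matrices O_A ∈ M_{2n₁}(ℝ) and O_B ∈ M_{2n₂}(ℝ), each both orthogonal and symplectic, such that Γ' = blockdiag(O_A,O_B) · Γ · blockdiag(O_A,O_B)ᵀ has an Alice mode a ≤ n₁ and a Bob mode b ≤ n₂ whose 4×4 reduced covariance matrix on the quadratures (Q_a, Q_b, P_a, P_b) equals Γ_EPR((s+s⁻¹)/2, (s−s⁻¹)/2) and whose covariances with all other modes vanish. That is, ideal routing is achievable by local passive transformations.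 -/
set_option maxHeartbeats 1600000

open scoped ComplexOrder


open Matrix

noncomputable section

/-- Covariance matrix `diag(s,…,s,s⁻¹,…,s⁻¹)` of `n` equally squeezed vacuum modes. -/
def GammaSqz (n : ℕ) (s : ℝ) : Matrix (Fin n ⊕ Fin n) (Fin n ⊕ Fin n) ℝ :=
  Matrix.fromBlocks (s • 1) 0 0 (s⁻¹ • 1)

/-- The symplectic form in the global ordering `(Qᴬ, Pᴬ, Qᴮ, Pᴮ)`. -/
def OmegaAB (n₁ n₂ : ℕ) :
    Matrix ((Fin n₁ ⊕ Fin n₁) ⊕ (Fin n₂ ⊕ Fin n₂))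
      ((Fin n₁ ⊕ Fin n₁) ⊕ (Fin n₂ ⊕ Fin n₂)) ℝ :=
  Matrix.fromBlocks (Omega n₁) 0 0 (Omega n₂)

/-- The squeezed-vacuum covariance matrix in the global ordering `(Qᴬ, Pᴬ, Qᴮ, Pᴮ)`. -/
def GammaSqzAB (n₁ n₂ : ℕ) (s : ℝ) :
    Matrix ((Fin n₁ ⊕ Fin n₁) ⊕ (Fin n₂ ⊕ Fin n₂))
      ((Fin n₁ ⊕ Fin n₁) ⊕ (Fin n₂ ⊕ Fin n₂)) ℝ :=
  Matrix.fromBlocks (GammaSqz n₁ s) 0 0 (GammaSqz n₂ s)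

/-- Quadrature indices `(Q_a, Q_b, P_a, P_b)` of Alice's mode `a` and Bob's mode `b`
inside the global ordering `(Qᴬ, Pᴬ, Qᴮ, Pᴮ)`. -/
def pairEmb {n₁ n₂ : ℕ} (a : Fin n₁) (b : Fin n₂) :
    Fin 2 ⊕ Fin 2 → (Fin n₁ ⊕ Fin n₁) ⊕ (Fin n₂ ⊕ Fin n₂)
  | Sum.inl i => if i = 0 then Sum.inl (Sum.inl a) else Sum.inr (Sum.inl b)
  | Sum.inr i => if i = 0 then Sum.inl (Sum.inr a) else Sum.inr (Sum.inr b)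

lemma exists_unitary_column {n : ℕ} (i₀ : Fin n) (u : Fin n → ℂ)
    (hu : ∑ i, (starRingEnd ℂ) (u i) * u i = 1) :
    ∃ U : Matrix (Fin n) (Fin n) ℂ, Uᴴ * U = 1 ∧ ∀ i, U i i₀ = u i := by
  classical
  set E := EuclideanSpace ℂ (Fin n) with hE
  have card : Module.finrank ℂ E = Fintype.card (Fin n) := by
    simp [hE]; exact finrank_euclideanSpace_fin
  set v : Fin n → E := fun _ => (WithLp.equiv 2 (Fin n → ℂ)).symm u with hv
  have horth : Orthonormal ℂ (Set.restrict {i₀} v) := by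
    rw [orthonormal_iff_ite]
    rintro ⟨i, hi⟩ ⟨j, hj⟩
    simp only [Set.mem_singleton_iff] at hi hj
    subst hi; subst hj
    simp only [Set.restrict_apply, if_pos rfl, Subtype.mk.injEq, if_true]
    rw [PiLp.inner_apply]
    simp only [Complex.conj_mul'] at hu
    simp [hv]
    exact hu
  obtain ⟨b, hb⟩ := horth.exists_orthonormalBasis_extension_of_card_eq card
  refine ⟨Matrix.of (fun i j => (WithLp.equiv 2 (Fin n → ℂ)) (b j) i), ?_, ?_⟩
  · ext i j
    have := (orthonormal_iff_ite.mp b.orthonormal) i j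
    rw [PiLp.inner_apply] at this
    simp only [Matrix.mul_apply, Matrix.conjTranspose_apply, Matrix.of_apply, Matrix.one_apply]
    simpa [mul_comm] using this
  · intro i
    have := hb i₀ (Set.mem_singleton i₀)
    simp only [Matrix.of_apply, this, hv]
    rfl

lemma exists_passive {n : ℕ} (i₀ : Fin n) (e : Fin n ⊕ Fin n → ℝ) (he : e ⬝ᵥ e = 1) :
    ∃ O : Matrix (Fin n ⊕ Fin n) (Fin n ⊕ Fin n) ℝ,
      Oᵀ * O = 1 ∧ Oᵀ * Omega n * O = Omega n ∧
      (∀ i, O (Sum.inl i₀) i = e i) ∧ (∀ i, O (Sum.inr i₀) i = -(Omega n *ᵥ e) i) := by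
  classical
  set u : Fin n → ℂ := fun i => (e (Sum.inl i) : ℂ) + (e (Sum.inr i) : ℂ) * Complex.I with hu_def
  have hu : ∑ i, (starRingEnd ℂ) (u i) * u i = 1 := by
    have key : ∀ i, (starRingEnd ℂ) (u i) * u i =
        ((e (Sum.inl i) * e (Sum.inl i) + e (Sum.inr i) * e (Sum.inr i) : ℝ) : ℂ) := by
      intro i
      simp only [hu_def, Complex.ext_iff, Complex.mul_re, Complex.mul_im, Complex.add_re,
        Complex.add_im, Complex.ofReal_re, Complex.ofReal_im, Complex.I_re, Complex.I_im,
        Complex.conj_re, Complex.conj_im]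
      constructor <;> ring
    rw [Finset.sum_congr rfl (fun i _ => key i), ← Complex.ofReal_sum]
    norm_cast
    rw [← he]
    rw [Finset.sum_add_distrib]
    simp [dotProduct, Fintype.sum_sum_type]
  obtain ⟨U, hU, hUcol⟩ := exists_unitary_column i₀ u hu
  set Ur := U.map Complex.re with hUr
  set Ui := U.map Complex.im with hUi
  -- entrywise consequences of unitarity
  have h1 : ∀ i j, ∑ k, (Ur k i * Ur k j + Ui k i * Ui k j) = if i = j then 1 else 0 := by
    intro i j
    have := congrFun (congrFun hU i) j
    rw [Matrix.mul_apply] at this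
    have hre := congrArg Complex.re this
    rw [Complex.re_sum] at hre
    simp only [Matrix.conjTranspose_apply, Matrix.one_apply, apply_ite Complex.re,
      Complex.one_re, Complex.zero_re] at hre
    rw [← hre]
    refine Finset.sum_congr rfl fun k _ => ?_
    simp only [RCLike.star_def, Complex.mul_re, Complex.conj_re, Complex.conj_im, hUr, hUi,
      Matrix.map_apply]
    ring
  have h2 : ∀ i j, ∑ k, (Ur k i * Ui k j - Ui k i * Ur k j) = 0 := by
    intro i j
    have := congrFun (congrFun hU i) j
    rw [Matrix.mul_apply] at this
    have him := congrArg Complex.im this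
    rw [Complex.im_sum] at him
    simp only [Matrix.conjTranspose_apply, Matrix.one_apply, apply_ite Complex.im,
      Complex.one_im, Complex.zero_im, ite_self] at him
    rw [← him]
    refine Finset.sum_congr rfl fun k _ => ?_
    simp only [RCLike.star_def, Complex.mul_im, Complex.conj_re, Complex.conj_im, hUr, hUi,
      Matrix.map_apply]
    ring
  set P : Matrix (Fin n ⊕ Fin n) (Fin n ⊕ Fin n) ℝ := Matrix.fromBlocks Ur (-Ui) Ui Ur with hP
  have hPtP : Pᵀ * P = 1 := by
    ext i j
    rcases i with i | i <;> rcases j with j | j <;>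
      simp only [hP, Matrix.mul_apply, Matrix.transpose_apply, Fintype.sum_sum_type,
        Matrix.fromBlocks_apply₁₁, Matrix.fromBlocks_apply₁₂, Matrix.fromBlocks_apply₂₁,
        Matrix.fromBlocks_apply₂₂, Matrix.neg_apply, Matrix.one_apply, Sum.inl.injEq,
        Sum.inr.injEq, reduceCtorEq]
    · rw [← Finset.sum_add_distrib, ← h1 i j]
    · rw [← Finset.sum_add_distrib, ← h2 j i]
      exact Finset.sum_congr rfl fun k _ => by ring
    · rw [← Finset.sum_add_distrib, ← h2 i j]
      exact Finset.sum_congr rfl fun k _ => by ring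
    · rw [← Finset.sum_add_distrib, ← h1 i j]
      exact Finset.sum_congr rfl fun k _ => by ring
  have hcomm : P * Omega n = Omega n * P := by
    simp only [hP, Omega, Matrix.fromBlocks_multiply]
    simp only [Matrix.mul_zero, Matrix.zero_mul, Matrix.mul_one, Matrix.one_mul,
      Matrix.mul_neg, Matrix.neg_mul, zero_add, add_zero, neg_neg, neg_zero]
  have hPPt : P * Pᵀ = 1 := mul_eq_one_comm.mp hPtP
  refine ⟨Pᵀ, by simpa using hPPt, ?_, ?_, ?_⟩
  · calc Pᵀᵀ * Omega n * Pᵀ = P * Omega n * Pᵀ := by rw [Matrix.transpose_transpose]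
      _ = Omega n * P * Pᵀ := by rw [hcomm]
      _ = Omega n * (P * Pᵀ) := by rw [Matrix.mul_assoc]
      _ = Omega n := by rw [hPPt, Matrix.mul_one]
  · intro i
    rcases i with i | i <;>
      simp [hP, Matrix.transpose_apply, hUr, hUi, Matrix.map_apply, hUcol, hu_def]
  · intro i
    have hOe : ∀ j, (Omega n *ᵥ e) (Sum.inl j) = e (Sum.inr j) ∧
        (Omega n *ᵥ e) (Sum.inr j) = -e (Sum.inl j) := by
      intro j
      constructor <;>
        simp [Omega, Matrix.mulVec, dotProduct, Fintype.sum_sum_type,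
          Matrix.fromBlocks_apply₁₁, Matrix.fromBlocks_apply₁₂, Matrix.fromBlocks_apply₂₁,
          Matrix.fromBlocks_apply₂₂, Matrix.one_apply, Finset.sum_ite_eq]
    rcases i with i | i
    · rw [(hOe i).1]
      simp [hP, Matrix.transpose_apply, hUr, hUi, Matrix.map_apply, hUcol, hu_def]
    · rw [(hOe i).2]
      simp [hP, Matrix.transpose_apply, hUr, hUi, Matrix.map_apply, hUcol, hu_def]

lemma omega_transpose (n : ℕ) : (Omega n)ᵀ = -(Omega n) := by
  ext (i|i) (j|j) <;>
    simp [Omega, Matrix.one_apply, eq_comm]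

lemma omega_mul_omega (n : ℕ) : Omega n * Omega n = -1 := by
  rw [Omega, Matrix.fromBlocks_multiply]
  simp only [Matrix.mul_zero, Matrix.zero_mul, Matrix.mul_one, Matrix.one_mul,
    Matrix.mul_neg, Matrix.neg_mul, zero_add, add_zero, neg_neg, neg_zero, Matrix.mul_zero]
  rw [← Matrix.fromBlocks_one]
  ext (i|i) (j|j) <;> simp [Matrix.fromBlocks]

lemma mapR_mul {ι : Type*} [Fintype ι] (X Y : Matrix ι ι ℝ) :
    (X * Y).map Complex.ofReal = X.map Complex.ofReal * Y.map Complex.ofReal := by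
  ext i j
  simp [Matrix.mul_apply, Matrix.map_apply]

lemma mapR_one {ι : Type*} [Fintype ι] [DecidableEq ι] :
    (1 : Matrix ι ι ℝ).map Complex.ofReal = 1 := by
  ext i j
  simp [Matrix.map_apply, Matrix.one_apply, apply_ite Complex.ofReal]

lemma mapR_add {ι : Type*} (X Y : Matrix ι ι ℝ) :
    (X + Y).map Complex.ofReal = X.map Complex.ofReal + Y.map Complex.ofReal := by
  ext i j
  simp [Matrix.map_apply]

lemma mapR_smul {ι : Type*} (r : ℝ) (X : Matrix ι ι ℝ) :
    (r • X).map Complex.ofReal = (r : ℂ) • X.map Complex.ofReal := by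
  ext i j
  simp [Matrix.map_apply]

/-- Sufficiency of the symplectic-spectrum criterion for graph states with equal
squeezing: if `Γ = S Γ_sqz Sᵀ` for a passive (orthogonal and symplectic) `S`, and
`λ = (s+s⁻¹)/2` is a symplectic eigenvalue of Alice's reduced covariance matrix
`Γ_A`, then local passive transformations `O_A`, `O_B` extract a decoupled EPR pair
`Γ_EPR((s+s⁻¹)/2, (s−s⁻¹)/2)` between some Alice mode `a` and Bob mode `b`. -/
theorem routing_criterion_sufficient {n₁ n₂ : ℕ} (hn₁ : 1 ≤ n₁) (hn₂ : 1 ≤ n₂)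
    (s : ℝ) (hs : 0 < s) (hs1 : s ≠ 1)
    (S : Matrix ((Fin n₁ ⊕ Fin n₁) ⊕ (Fin n₂ ⊕ Fin n₂))
      ((Fin n₁ ⊕ Fin n₁) ⊕ (Fin n₂ ⊕ Fin n₂)) ℝ)
    (hSorth : Sᵀ * S = 1)
    (hSsymp : Sᵀ * OmegaAB n₁ n₂ * S = OmegaAB n₁ n₂)
    (hspec : (Complex.I * ((s + s⁻¹) / 2)) ∈
      spectrum ℂ
        ((Omega n₁ *
          (S * GammaSqzAB n₁ n₂ s * Sᵀ).submatrix Sum.inl Sum.inl).map Complex.ofReal)) :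
    ∃ (O_A : Matrix (Fin n₁ ⊕ Fin n₁) (Fin n₁ ⊕ Fin n₁) ℝ)
      (O_B : Matrix (Fin n₂ ⊕ Fin n₂) (Fin n₂ ⊕ Fin n₂) ℝ),
      O_Aᵀ * O_A = 1 ∧ O_Aᵀ * Omega n₁ * O_A = Omega n₁ ∧
      O_Bᵀ * O_B = 1 ∧ O_Bᵀ * Omega n₂ * O_B = Omega n₂ ∧
      ∃ (a : Fin n₁) (b : Fin n₂),
        (Matrix.fromBlocks O_A 0 0 O_B * (S * GammaSqzAB n₁ n₂ s * Sᵀ) *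
            (Matrix.fromBlocks O_A 0 0 O_B)ᵀ).submatrix (pairEmb a b) (pairEmb a b) =
          GammaEPR ((s + s⁻¹) / 2) ((s - s⁻¹) / 2) ∧
        ∀ u v,
          u ∈ ({Sum.inl (Sum.inl a), Sum.inl (Sum.inr a), Sum.inr (Sum.inl b),
              Sum.inr (Sum.inr b)} :
            Set ((Fin n₁ ⊕ Fin n₁) ⊕ (Fin n₂ ⊕ Fin n₂))) →
          v ∉ ({Sum.inl (Sum.inl a), Sum.inl (Sum.inr a), Sum.inr (Sum.inl b),
              Sum.inr (Sum.inr b)} :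
            Set ((Fin n₁ ⊕ Fin n₁) ⊕ (Fin n₂ ⊕ Fin n₂))) →
          (Matrix.fromBlocks O_A 0 0 O_B * (S * GammaSqzAB n₁ n₂ s * Sᵀ) *
            (Matrix.fromBlocks O_A 0 0 O_B)ᵀ) u v = 0 ∧
          (Matrix.fromBlocks O_A 0 0 O_B * (S * GammaSqzAB n₁ n₂ s * Sᵀ) *
            (Matrix.fromBlocks O_A 0 0 O_B)ᵀ) v u = 0 := by
  
  classical
  set l : ℝ := (s + s⁻¹) / 2 with hl
  set m : ℝ := (s - s⁻¹) / 2 with hm_def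
  have hs0 : s ≠ 0 := ne_of_gt hs
  have hm : m ≠ 0 := by
    rw [hm_def]
    intro h
    apply hs1
    have h2 : s = s⁻¹ := by linarith [h]
    have h3 : s * s = 1 := by
      rw [← mul_inv_cancel₀ hs0]; rw [← h2]
    nlinarith
  -- the sign matrix K
  obtain ⟨K, hK⟩ : ∃ K : Matrix ((Fin n₁ ⊕ Fin n₁) ⊕ (Fin n₂ ⊕ Fin n₂))
      ((Fin n₁ ⊕ Fin n₁) ⊕ (Fin n₂ ⊕ Fin n₂)) ℝ,
      K = Matrix.fromBlocks (Matrix.fromBlocks 1 0 0 (-1)) 0 0 (Matrix.fromBlocks 1 0 0 (-1)) :=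
    ⟨_, rfl⟩
  have hGamma : GammaSqzAB n₁ n₂ s = l • 1 + m • K := by
    ext i j
    rcases i with (i | i) | (i | i) <;> rcases j with (j | j) | (j | j) <;>
      simp [GammaSqzAB, GammaSqz, hK, Matrix.one_apply, hl, hm_def] <;>
      split_ifs <;> ring
  have hSST : S * Sᵀ = 1 := mul_eq_one_comm.mp hSorth
  have hΩS : OmegaAB n₁ n₂ * S = S * OmegaAB n₁ n₂ := by
    calc OmegaAB n₁ n₂ * S = (S * Sᵀ) * (OmegaAB n₁ n₂ * S) := by rw [hSST, one_mul]
      _ = S * (Sᵀ * OmegaAB n₁ n₂ * S) := by simp only [Matrix.mul_assoc]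
      _ = S * OmegaAB n₁ n₂ := by rw [hSsymp]
  have hSTΩ : Sᵀ * OmegaAB n₁ n₂ = OmegaAB n₁ n₂ * Sᵀ := by
    calc Sᵀ * OmegaAB n₁ n₂ = Sᵀ * OmegaAB n₁ n₂ * (S * Sᵀ) := by rw [hSST, mul_one]
      _ = Sᵀ * (OmegaAB n₁ n₂ * S) * Sᵀ := by simp only [Matrix.mul_assoc]
      _ = Sᵀ * (S * OmegaAB n₁ n₂) * Sᵀ := by rw [hΩS]
      _ = (Sᵀ * S) * (OmegaAB n₁ n₂ * Sᵀ) := by simp only [Matrix.mul_assoc]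
      _ = OmegaAB n₁ n₂ * Sᵀ := by rw [hSorth, one_mul]
  have hKT : Kᵀ = K := by
    ext i j
    rcases i with (i | i) | (i | i) <;> rcases j with (j | j) | (j | j) <;>
      simp [hK, Matrix.one_apply, eq_comm]
  have hKK : K * K = 1 := by
    rw [hK, Matrix.fromBlocks_multiply]
    simp only [Matrix.mul_zero, Matrix.zero_mul, zero_add, add_zero, Matrix.fromBlocks_multiply,
      Matrix.mul_one, Matrix.one_mul, Matrix.mul_neg, Matrix.neg_mul, neg_neg, neg_zero]
    rw [← Matrix.fromBlocks_one, ← Matrix.fromBlocks_one]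
    congr 1 <;> rw [← Matrix.fromBlocks_one]
  have hKnΩ : ∀ n : ℕ, (Matrix.fromBlocks 1 0 0 (-1) : Matrix (Fin n ⊕ Fin n) _ ℝ) * Omega n
      = -(Omega n * Matrix.fromBlocks 1 0 0 (-1)) := by
    intro n
    rw [Omega, Matrix.fromBlocks_multiply, Matrix.fromBlocks_multiply, Matrix.fromBlocks_neg]
    congr 1 <;> simp
  have hKΩ : K * OmegaAB n₁ n₂ = -(OmegaAB n₁ n₂ * K) := by
    rw [hK, OmegaAB, Matrix.fromBlocks_multiply, Matrix.fromBlocks_multiply,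
      Matrix.fromBlocks_neg]
    congr 1 <;> simp [hKnΩ n₁, hKnΩ n₂]
  obtain ⟨M, hM⟩ : ∃ M : Matrix ((Fin n₁ ⊕ Fin n₁) ⊕ (Fin n₂ ⊕ Fin n₂))
      ((Fin n₁ ⊕ Fin n₁) ⊕ (Fin n₂ ⊕ Fin n₂)) ℝ, M = S * K * Sᵀ := ⟨_, rfl⟩
  have hGamM : S * GammaSqzAB n₁ n₂ s * Sᵀ = l • (1 : Matrix _ _ ℝ) + m • M := by
    rw [hGamma, Matrix.mul_add, Matrix.add_mul]
    congr 1
    · rw [Matrix.mul_smul, Matrix.smul_mul, Matrix.mul_one, hSST]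
    · rw [Matrix.mul_smul, Matrix.smul_mul, hM]
  have hMT : Mᵀ = M := by
    rw [hM]
    simp only [Matrix.transpose_mul, Matrix.transpose_transpose, hKT]
    simp only [Matrix.mul_assoc]
  have hMM : M * M = 1 := by
    have h1 : M * M = S * (K * ((Sᵀ * S) * (K * Sᵀ))) := by
      rw [hM]; simp only [Matrix.mul_assoc]
    rw [h1, hSorth, one_mul, ← Matrix.mul_assoc K K, hKK, one_mul, hSST]
  have hMΩ : M * OmegaAB n₁ n₂ = -(OmegaAB n₁ n₂ * M) := by
    calc M * OmegaAB n₁ n₂ = S * K * (Sᵀ * OmegaAB n₁ n₂) := by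
          rw [hM]; simp only [Matrix.mul_assoc]
      _ = S * (K * OmegaAB n₁ n₂) * Sᵀ := by rw [hSTΩ]; simp only [Matrix.mul_assoc]
      _ = S * -(OmegaAB n₁ n₂ * K) * Sᵀ := by rw [hKΩ]
      _ = -(S * OmegaAB n₁ n₂ * (K * Sᵀ)) := by
          simp only [Matrix.mul_neg, Matrix.neg_mul, Matrix.mul_assoc]
      _ = -(OmegaAB n₁ n₂ * M) := by rw [← hΩS, hM]; simp only [Matrix.mul_assoc]
  -- blocks
  obtain ⟨A11, hA11⟩ : ∃ A : Matrix (Fin n₁ ⊕ Fin n₁) (Fin n₁ ⊕ Fin n₁) ℝ,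
    A = M.toBlocks₁₁ := ⟨_, rfl⟩
  have hA11app : ∀ i j, A11 i j = M (Sum.inl i) (Sum.inl j) := fun i j => by rw [hA11]; rfl
  have hΓsub : (S * GammaSqzAB n₁ n₂ s * Sᵀ).submatrix Sum.inl Sum.inl
      = l • (1 : Matrix (Fin n₁ ⊕ Fin n₁) _ ℝ) + m • A11 := by
    rw [hGamM]
    ext i j
    simp [Matrix.one_apply, hA11app, Sum.inl.injEq]
  have hsub1 : (M * OmegaAB n₁ n₂).submatrix Sum.inl Sum.inl = A11 * Omega n₁ := by
    ext i j
    simp only [Matrix.submatrix_apply, Matrix.mul_apply, Fintype.sum_sum_type, OmegaAB,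
      Matrix.fromBlocks_apply₁₁, Matrix.fromBlocks_apply₂₁, Matrix.zero_apply, mul_zero,
      Finset.sum_const_zero, add_zero, hA11app]
  have hsub2 : (OmegaAB n₁ n₂ * M).submatrix Sum.inl Sum.inl = Omega n₁ * A11 := by
    ext i j
    simp only [Matrix.submatrix_apply, Matrix.mul_apply, Fintype.sum_sum_type, OmegaAB,
      Matrix.fromBlocks_apply₁₁, Matrix.fromBlocks_apply₁₂, Matrix.zero_apply, zero_mul,
      Finset.sum_const_zero, add_zero, hA11app]
  have hA11Ω : A11 * Omega n₁ = -(Omega n₁ * A11) := by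
    rw [← hsub1, hMΩ, ← hsub2]
    ext i j
    simp
  have hA11T : A11ᵀ = A11 := by
    ext i j
    have := congrFun (congrFun hMT (Sum.inl i)) (Sum.inl j)
    simpa [hA11app] using this
  -- the real matrix B and its square
  obtain ⟨X, hX⟩ : ∃ X : Matrix (Fin n₁ ⊕ Fin n₁) (Fin n₁ ⊕ Fin n₁) ℝ,
    X = l • 1 + m • A11 := ⟨_, rfl⟩
  obtain ⟨B, hB⟩ : ∃ B : Matrix (Fin n₁ ⊕ Fin n₁) (Fin n₁ ⊕ Fin n₁) ℝ,
    B = Omega n₁ * X := ⟨_, rfl⟩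
  have hXΩ : X * Omega n₁ = Omega n₁ * (l • 1 - m • A11) := by
    rw [hX, Matrix.add_mul, Matrix.smul_mul, one_mul, Matrix.smul_mul, hA11Ω,
      Matrix.mul_sub, Matrix.mul_smul, mul_one, Matrix.mul_smul]
    simp [sub_eq_add_neg]
  have hBB : B * B = (-(l * l)) • (1 : Matrix (Fin n₁ ⊕ Fin n₁) _ ℝ)
      + (m * m) • (A11 * A11) := by
    calc B * B = Omega n₁ * ((X * Omega n₁) * X) := by
          rw [hB]; simp only [Matrix.mul_assoc]
      _ = Omega n₁ * Omega n₁ * ((l • 1 - m • A11) * X) := by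
          rw [hXΩ]; simp only [Matrix.mul_assoc]
      _ = -((l • 1 - m • A11) * X) := by rw [omega_mul_omega, Matrix.neg_mul, one_mul]
      _ = (-(l * l)) • (1 : Matrix (Fin n₁ ⊕ Fin n₁) _ ℝ) + (m * m) • (A11 * A11) := by
          rw [hX]
          simp only [Matrix.sub_mul, Matrix.mul_add, Matrix.add_mul, Matrix.smul_mul,
            Matrix.mul_smul, Matrix.one_mul, Matrix.mul_one, smul_smul]
          module
  -- spectral step
  have hBmatch : Omega n₁ * (S * GammaSqzAB n₁ n₂ s * Sᵀ).submatrix Sum.inl Sum.inl = B := by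
    rw [hΓsub, hB, hX]
  have hscal : (Complex.I * ((s : ℂ) + (s : ℂ)⁻¹) / 2 : ℂ) = Complex.I * (l : ℂ) := by
    rw [hl]; push_cast; ring
  have hspec' : (Complex.I * (l : ℂ)) ∈ spectrum ℂ (B.map Complex.ofReal) := by
    rw [← hBmatch]
    have h := hspec
    rw [show (Complex.I * ((↑s + ↑s⁻¹) / 2) : ℂ) = Complex.I * (l : ℂ) from by
      rw [hl]; push_cast; ring] at h
    exact h
  have hnu : ¬ IsUnit (algebraMap ℂ (Matrix (Fin n₁ ⊕ Fin n₁) (Fin n₁ ⊕ Fin n₁) ℂ)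
      (Complex.I * (l : ℂ)) - B.map Complex.ofReal) := spectrum.mem_iff.mp hspec'
  have hdet : ((Complex.I * (l : ℂ)) • (1 : Matrix (Fin n₁ ⊕ Fin n₁) (Fin n₁ ⊕ Fin n₁) ℂ)
      - B.map Complex.ofReal).det = 0 := by
    by_contra hne
    apply hnu
    rw [Algebra.algebraMap_eq_smul_one]
    exact (Matrix.isUnit_iff_isUnit_det _).mpr (isUnit_iff_ne_zero.mpr hne)
  obtain ⟨v, hv0, hv⟩ := Matrix.exists_mulVec_eq_zero_iff.mpr hdet
  have hBv : (B.map Complex.ofReal) *ᵥ v = (Complex.I * (l : ℂ)) • v := by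
    rw [Matrix.sub_mulVec, Matrix.smul_mulVec, Matrix.one_mulVec, sub_eq_zero] at hv
    exact hv.symm
  have hBc2 : (B.map Complex.ofReal) * (B.map Complex.ofReal)
      = (-((l : ℂ) * (l : ℂ))) • (1 : Matrix (Fin n₁ ⊕ Fin n₁) (Fin n₁ ⊕ Fin n₁) ℂ)
        + ((m : ℂ) * (m : ℂ)) • (A11.map Complex.ofReal * A11.map Complex.ofReal) := by
    rw [← mapR_mul, hBB, mapR_add, mapR_smul, mapR_smul, mapR_one, mapR_mul]
    push_cast
    ring_nf
  have hker : (A11.map Complex.ofReal) *ᵥ ((A11.map Complex.ofReal) *ᵥ v) = 0 := by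
    have h1 : (B.map Complex.ofReal) *ᵥ ((B.map Complex.ofReal) *ᵥ v)
        = (-((l : ℂ) * (l : ℂ))) • v := by
      rw [hBv, Matrix.mulVec_smul, hBv, smul_smul]
      congr 1
      calc (Complex.I * (l:ℂ)) * (Complex.I * (l:ℂ)) = Complex.I * Complex.I * ((l:ℂ)*(l:ℂ)) := by
            ring
        _ = -((l:ℂ)*(l:ℂ)) := by rw [Complex.I_mul_I]; ring
    have h2 : (B.map Complex.ofReal) *ᵥ ((B.map Complex.ofReal) *ᵥ v)
        = (-((l : ℂ) * (l : ℂ))) • v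
          + ((m : ℂ) * (m : ℂ)) • ((A11.map Complex.ofReal) *ᵥ ((A11.map Complex.ofReal) *ᵥ v)) := by
      rw [Matrix.mulVec_mulVec, hBc2, Matrix.add_mulVec, Matrix.smul_mulVec,
        Matrix.smul_mulVec, Matrix.one_mulVec, ← Matrix.mulVec_mulVec]
    have h3 := h1.symm.trans h2
    have h4 : ((m : ℂ) * (m : ℂ)) • ((A11.map Complex.ofReal) *ᵥ ((A11.map Complex.ofReal) *ᵥ v))
        = 0 := (left_eq_add.mp h3)
    have hmC : ((m : ℂ) * (m : ℂ)) ≠ 0 :=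
      mul_ne_zero (Complex.ofReal_ne_zero.mpr hm) (Complex.ofReal_ne_zero.mpr hm)
    exact (smul_eq_zero.mp h4).resolve_left hmC
  have hAcH : (A11.map Complex.ofReal)ᴴ = A11.map Complex.ofReal := by
    ext i j
    simp only [Matrix.conjTranspose_apply, Matrix.map_apply, Complex.conj_ofReal,
      RCLike.star_def]
    exact_mod_cast congrFun (congrFun hA11T i) j
  have hA11v : (A11.map Complex.ofReal) *ᵥ v = 0 := by
    have hsw : star ((A11.map Complex.ofReal) *ᵥ v) ⬝ᵥ ((A11.map Complex.ofReal) *ᵥ v) = 0 := by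
      rw [Matrix.star_mulVec, hAcH, ← Matrix.dotProduct_mulVec, hker, dotProduct_zero]
    exact dotProduct_star_self_eq_zero.mp hsw
  -- real kernel vector
  have hre_ker : A11 *ᵥ (fun i => (v i).re) = 0 := by
    funext i
    have h := congrArg Complex.re (congrFun hA11v i)
    simp only [Matrix.mulVec, dotProduct, Matrix.map_apply, Complex.re_sum,
      Complex.re_ofReal_mul, Pi.zero_apply, Complex.zero_re] at h ⊢
    exact h
  have him_ker : A11 *ᵥ (fun i => (v i).im) = 0 := by
    funext i
    have h := congrArg Complex.im (congrFun hA11v i)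
    simp only [Matrix.mulVec, dotProduct, Matrix.map_apply, Complex.im_sum,
      Complex.im_ofReal_mul, Pi.zero_apply, Complex.zero_im] at h ⊢
    exact h
  have hxyne : (fun i => (v i).re) ≠ (0 : Fin n₁ ⊕ Fin n₁ → ℝ)
      ∨ (fun i => (v i).im) ≠ (0 : Fin n₁ ⊕ Fin n₁ → ℝ) := by
    by_contra hcon
    push_neg at hcon
    apply hv0
    funext i
    exact Complex.ext (by simpa using congrFun hcon.1 i) (by simpa using congrFun hcon.2 i)
  obtain ⟨e₀, he₀ker, he₀ne⟩ :
      ∃ e₀ : Fin n₁ ⊕ Fin n₁ → ℝ, A11 *ᵥ e₀ = 0 ∧ e₀ ≠ 0 := by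
    rcases hxyne with h | h
    · exact ⟨_, hre_ker, h⟩
    · exact ⟨_, him_ker, h⟩
  have hpos : 0 < e₀ ⬝ᵥ e₀ := by
    have h0 : e₀ ⬝ᵥ e₀ ≠ 0 := fun h => he₀ne (dotProduct_self_eq_zero.mp h)
    have h1 : 0 ≤ e₀ ⬝ᵥ e₀ := Finset.sum_nonneg fun i _ => mul_self_nonneg _
    exact lt_of_le_of_ne h1 (Ne.symm h0)
  obtain ⟨c, hc⟩ : ∃ c : ℝ, c = Real.sqrt (e₀ ⬝ᵥ e₀) := ⟨_, rfl⟩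
  have hc0 : c ≠ 0 := by
    rw [hc]
    exact ne_of_gt (Real.sqrt_pos.mpr hpos)
  have hcc : c * c = e₀ ⬝ᵥ e₀ := by
    rw [hc]; exact Real.mul_self_sqrt hpos.le
  obtain ⟨e, he_def⟩ : ∃ e : Fin n₁ ⊕ Fin n₁ → ℝ, e = c⁻¹ • e₀ := ⟨_, rfl⟩
  have he1 : e ⬝ᵥ e = 1 := by
    rw [he_def, smul_dotProduct, dotProduct_smul, smul_eq_mul, smul_eq_mul,
      ← hcc]
    field_simp
  have hA11e : A11 *ᵥ e = 0 := by
    rw [he_def, Matrix.mulVec_smul, he₀ker, smul_zero]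
  -- vectors in the global space
  have hMelim : ∀ (p : Fin n₁ ⊕ Fin n₁ → ℝ) (q : Fin n₂ ⊕ Fin n₂ → ℝ),
      M *ᵥ Sum.elim p q = Sum.elim (M.toBlocks₁₁ *ᵥ p + M.toBlocks₁₂ *ᵥ q)
        (M.toBlocks₂₁ *ᵥ p + M.toBlocks₂₂ *ᵥ q) := by
    intro p q
    conv_lhs => rw [← Matrix.fromBlocks_toBlocks M]
    rw [Matrix.fromBlocks_mulVec]
    simp [Sum.elim_comp_inl, Sum.elim_comp_inr]
  have hΩelim : ∀ (p : Fin n₁ ⊕ Fin n₁ → ℝ) (q : Fin n₂ ⊕ Fin n₂ → ℝ),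
      OmegaAB n₁ n₂ *ᵥ Sum.elim p q = Sum.elim (Omega n₁ *ᵥ p) (Omega n₂ *ᵥ q) := by
    intro p q
    rw [OmegaAB, Matrix.fromBlocks_mulVec]
    simp [Matrix.zero_mulVec, Sum.elim_comp_inl, Sum.elim_comp_inr]
  obtain ⟨g, hg⟩ : ∃ g : Fin n₂ ⊕ Fin n₂ → ℝ, g = M.toBlocks₂₁ *ᵥ e := ⟨_, rfl⟩
  have hMvQa : M *ᵥ Sum.elim e (0 : Fin n₂ ⊕ Fin n₂ → ℝ) = Sum.elim (0 : Fin n₁ ⊕ Fin n₁ → ℝ) g := by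
    rw [hMelim, Matrix.mulVec_zero, Matrix.mulVec_zero, add_zero, add_zero, ← hg]
    have : M.toBlocks₁₁ *ᵥ e = 0 := by rw [← hA11]; exact hA11e
    rw [this]
  have hMvPb : M *ᵥ Sum.elim (0 : Fin n₁ ⊕ Fin n₁ → ℝ) g = Sum.elim e (0 : Fin n₂ ⊕ Fin n₂ → ℝ) := by
    have h := congrArg (fun z => M *ᵥ z) hMvQa
    simp only [Matrix.mulVec_mulVec, hMM, Matrix.one_mulVec] at h
    exact h.symm
  have hantivec : ∀ z, M *ᵥ (OmegaAB n₁ n₂ *ᵥ z) = -(OmegaAB n₁ n₂ *ᵥ (M *ᵥ z)) := by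
    intro z
    rw [Matrix.mulVec_mulVec, hMΩ, Matrix.neg_mulVec, ← Matrix.mulVec_mulVec]
  have hMvPa : M *ᵥ Sum.elim (-(Omega n₁ *ᵥ e)) (0 : Fin n₂ ⊕ Fin n₂ → ℝ) = Sum.elim (0 : Fin n₁ ⊕ Fin n₁ → ℝ) (Omega n₂ *ᵥ g) := by
    have h1 : Sum.elim (-(Omega n₁ *ᵥ e)) (0 : Fin n₂ ⊕ Fin n₂ → ℝ)
        = -(OmegaAB n₁ n₂ *ᵥ Sum.elim e 0) := by
      rw [hΩelim, Matrix.mulVec_zero]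
      funext i; rcases i with i | i <;> simp
    rw [h1, Matrix.mulVec_neg, hantivec, neg_neg, hMvQa, hΩelim, Matrix.mulVec_zero]
  have hMvQb : M *ᵥ Sum.elim (0 : Fin n₁ ⊕ Fin n₁ → ℝ) (Omega n₂ *ᵥ g) = Sum.elim (-(Omega n₁ *ᵥ e)) (0 : Fin n₂ ⊕ Fin n₂ → ℝ) := by
    have h1 : Sum.elim (0 : Fin n₁ ⊕ Fin n₁ → ℝ) (Omega n₂ *ᵥ g)
        = OmegaAB n₁ n₂ *ᵥ Sum.elim 0 g := by
      rw [hΩelim, Matrix.mulVec_zero]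
    rw [h1, hantivec, hMvPb, hΩelim, Matrix.mulVec_zero]
    funext i; rcases i with i | i <;> simp
  -- norms
  have hMnormvec : ∀ z, (M *ᵥ z) ⬝ᵥ (M *ᵥ z) = z ⬝ᵥ z := by
    intro z
    calc (M *ᵥ z) ⬝ᵥ (M *ᵥ z) = ((M *ᵥ z) ᵥ* M) ⬝ᵥ z := Matrix.dotProduct_mulVec _ _ _
      _ = (Mᵀ *ᵥ (M *ᵥ z)) ⬝ᵥ z := by rw [Matrix.mulVec_transpose]
      _ = z ⬝ᵥ z := by rw [hMT, Matrix.mulVec_mulVec, hMM, Matrix.one_mulVec]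
  have hgg : g ⬝ᵥ g = 1 := by
    have h := hMnormvec (Sum.elim e (0 : Fin n₂ ⊕ Fin n₂ → ℝ))
    rw [hMvQa, sumElim_dotProduct_sumElim, sumElim_dotProduct_sumElim] at h
    simpa [he1] using h
  have hΩ2orth : (Omega n₂)ᵀ * Omega n₂ = 1 := by
    rw [omega_transpose, Matrix.neg_mul, omega_mul_omega, neg_neg]
  have hΩgg : (Omega n₂ *ᵥ g) ⬝ᵥ (Omega n₂ *ᵥ g) = 1 := by
    calc (Omega n₂ *ᵥ g) ⬝ᵥ (Omega n₂ *ᵥ g) = ((Omega n₂ *ᵥ g) ᵥ* Omega n₂) ⬝ᵥ g :=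
          Matrix.dotProduct_mulVec _ _ _
      _ = ((Omega n₂)ᵀ *ᵥ (Omega n₂ *ᵥ g)) ⬝ᵥ g := by rw [Matrix.mulVec_transpose]
      _ = g ⬝ᵥ g := by rw [Matrix.mulVec_mulVec, hΩ2orth, Matrix.one_mulVec]
      _ = 1 := hgg
  -- passive extensions
  have a : Fin n₁ := ⟨0, hn₁⟩
  have b : Fin n₂ := ⟨0, hn₂⟩
  obtain ⟨OA, hOA1, hOA2, hOAr1, hOAr2⟩ := exists_passive a e he1
  obtain ⟨OB, hOB1, hOB2, hOBr1, hOBr2⟩ := exists_passive b (Omega n₂ *ᵥ g) hΩgg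
  have hOBr2' : ∀ i, OB (Sum.inr b) i = g i := by
    intro i
    rw [hOBr2]
    have h2 : Omega n₂ *ᵥ (Omega n₂ *ᵥ g) = -g := by
      rw [Matrix.mulVec_mulVec, omega_mul_omega, Matrix.neg_mulVec, Matrix.one_mulVec]
    rw [h2]
    simp
  obtain ⟨O, hO⟩ : ∃ O : Matrix ((Fin n₁ ⊕ Fin n₁) ⊕ (Fin n₂ ⊕ Fin n₂))
      ((Fin n₁ ⊕ Fin n₁) ⊕ (Fin n₂ ⊕ Fin n₂)) ℝ, O = Matrix.fromBlocks OA 0 0 OB := ⟨_, rfl⟩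
  have hrQa : ∀ i, O (Sum.inl (Sum.inl a)) i = Sum.elim e (0 : Fin n₂ ⊕ Fin n₂ → ℝ) i := by
    rintro (i | i)
    · simpa [hO] using hOAr1 i
    · simp [hO]
  have hrPa : ∀ i, O (Sum.inl (Sum.inr a)) i
      = Sum.elim (-(Omega n₁ *ᵥ e)) (0 : Fin n₂ ⊕ Fin n₂ → ℝ) i := by
    rintro (i | i)
    · simpa [hO] using hOAr2 i
    · simp [hO]
  have hrQb : ∀ i, O (Sum.inr (Sum.inl b)) i
      = Sum.elim (0 : Fin n₁ ⊕ Fin n₁ → ℝ) (Omega n₂ *ᵥ g) i := by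
    rintro (i | i)
    · simp [hO]
    · simpa [hO] using hOBr1 i
  have hrPb : ∀ i, O (Sum.inr (Sum.inr b)) i
      = Sum.elim (0 : Fin n₁ ⊕ Fin n₁ → ℝ) g i := by
    rintro (i | i)
    · simp [hO]
    · simpa [hO] using hOBr2' i
  have hOO : Oᵀ * O = 1 := by
    rw [hO, Matrix.fromBlocks_transpose, Matrix.fromBlocks_multiply]
    simp only [Matrix.transpose_zero, Matrix.mul_zero, Matrix.zero_mul, add_zero, zero_add,
      hOA1, hOB1]
    exact Matrix.fromBlocks_one
  have hOOT : O * Oᵀ = 1 := mul_eq_one_comm.mp hOO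
  obtain ⟨N, hNdef⟩ : ∃ N : Matrix ((Fin n₁ ⊕ Fin n₁) ⊕ (Fin n₂ ⊕ Fin n₂))
      ((Fin n₁ ⊕ Fin n₁) ⊕ (Fin n₂ ⊕ Fin n₂)) ℝ, N = O * M * Oᵀ := ⟨_, rfl⟩
  have key : ∀ (vv ww : (Fin n₁ ⊕ Fin n₁) ⊕ (Fin n₂ ⊕ Fin n₂)) (rv rw : _ → ℝ),
      (∀ i, O vv i = rv i) → (∀ i, O ww i = rw i) → M *ᵥ rv = rw →
      ∀ u, N u vv = if u = ww then 1 else 0 := by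
    intro vv ww rv rw hvv hww hMr u
    have step1 : N u vv = ∑ k, (O * M) u k * rv k := by
      rw [hNdef, Matrix.mul_apply]
      exact Finset.sum_congr rfl fun k _ => by rw [Matrix.transpose_apply, hvv k]
    have step2 : ∑ k, (O * M) u k * rv k = (O *ᵥ (M *ᵥ rv)) u := by
      rw [Matrix.mulVec_mulVec]
      rfl
    have step3 : (O *ᵥ rw) u = ∑ k, O u k * O ww k := by
      simp only [Matrix.mulVec, dotProduct]
      exact Finset.sum_congr rfl fun k _ => by rw [hww k]
    have step4 : ∑ k, O u k * O ww k = (1 : Matrix _ _ ℝ) u ww := by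
      rw [← hOOT, Matrix.mul_apply]
      exact Finset.sum_congr rfl fun k _ => by rw [Matrix.transpose_apply]
    rw [step1, step2, hMr, step3, step4, Matrix.one_apply]
  have hNQa : ∀ u, N u (Sum.inl (Sum.inl a)) = if u = Sum.inr (Sum.inr b) then 1 else 0 :=
    key _ _ _ _ hrQa hrPb hMvQa
  have hNPa : ∀ u, N u (Sum.inl (Sum.inr a)) = if u = Sum.inr (Sum.inl b) then 1 else 0 :=
    key _ _ _ _ hrPa hrQb hMvPa
  have hNQb : ∀ u, N u (Sum.inr (Sum.inl b)) = if u = Sum.inl (Sum.inr a) then 1 else 0 :=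
    key _ _ _ _ hrQb hrPa hMvQb
  have hNPb : ∀ u, N u (Sum.inr (Sum.inr b)) = if u = Sum.inl (Sum.inl a) then 1 else 0 :=
    key _ _ _ _ hrPb hrQa hMvPb
  have hNsym : ∀ p q, N p q = N q p := by
    have hNT : Nᵀ = N := by
      rw [hNdef, Matrix.transpose_mul, Matrix.transpose_mul, Matrix.transpose_transpose, hMT,
        Matrix.mul_assoc]
    intro p q
    have h := congrFun (congrFun hNT q) p
    rwa [Matrix.transpose_apply] at h
  have hΓ' : O * (S * GammaSqzAB n₁ n₂ s * Sᵀ) * Oᵀ = l • (1 : Matrix _ _ ℝ) + m • N := by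
    rw [hGamM, Matrix.mul_add, Matrix.add_mul]
    congr 1
    · rw [Matrix.mul_smul, Matrix.smul_mul, Matrix.mul_one, hOOT]
    · rw [Matrix.mul_smul, Matrix.smul_mul, hNdef]
  refine ⟨OA, OB, hOA1, hOA2, hOB1, hOB2, a, b, ?_, ?_⟩
  · rw [← hO, hΓ']
    ext u w
    rcases u with u | u <;> rcases w with w | w <;> fin_cases u <;> fin_cases w <;>
      simp [pairEmb, GammaEPR, Matrix.one_apply, hNQa, hNPa, hNQb, hNPb] <;> ring
  · intro u w hu hw
    simp only [Set.mem_insert_iff, Set.mem_singleton_iff] at hu hw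
    push_neg at hw
    obtain ⟨hw1, hw2, hw3, hw4⟩ := hw
    rw [← hO]
    have hentry : ∀ p q, (O * (S * GammaSqzAB n₁ n₂ s * Sᵀ) * Oᵀ) p q
        = l * (1 : Matrix _ _ ℝ) p q + m * N p q := by
      intro p q
      rw [hΓ']
      simp [Matrix.add_apply, Matrix.smul_apply]
    constructor
    · rw [hentry]
      rcases hu with rfl | rfl | rfl | rfl
      · rw [Matrix.one_apply_ne (Ne.symm hw1), hNsym _ w, hNQa w, if_neg hw4]; ring
      · rw [Matrix.one_apply_ne (Ne.symm hw2), hNsym _ w, hNPa w, if_neg hw3]; ring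
      · rw [Matrix.one_apply_ne (Ne.symm hw3), hNsym _ w, hNQb w, if_neg hw2]; ring
      · rw [Matrix.one_apply_ne (Ne.symm hw4), hNsym _ w, hNPb w, if_neg hw1]; ring
    · rw [hentry]
      rcases hu with rfl | rfl | rfl | rfl
      · rw [Matrix.one_apply_ne hw1, hNQa w, if_neg hw4]; ring
      · rw [Matrix.one_apply_ne hw2, hNPa w, if_neg hw3]; ring
      · rw [Matrix.one_apply_ne hw3, hNQb w, if_neg hw2]; ring
      · rw [Matrix.one_apply_ne hw4, hNPb w, if_neg hw1]; ring
end
end
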